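/- Let U ⊆ ℂ be open with x·(x−1)·(x+1) ≠ 0 for all x ∈ U. Let Ψ : ℂ → ℂ be twice differentiable on U and satisfy x(x−1)(x+1)·Ψ''(x) + (3x²−1)·Ψ'(x) + x·Ψ(x) = 0 for all x ∈ U, and let g : ℂ → ℂ be twice differentiable on U with g(x)² = x(x−1)(x+1) for all x ∈ U. Then ψ := g·Ψ solves ψ'' = Q₁·ψ on U, where Q₁(x) := −(1/4)·(x²+1)²/(x²(x−1)²(x+1)²). -/

import Mathlib

open Complex

/-- `f` solves the equation `ψ'' = Q·ψ` on the open set `U`. -/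
def SolvesOn (Q f : ℂ → ℂ) (U : Set ℂ) : Prop :=
  (∀ x ∈ U, DifferentiableAt ℂ f x) ∧ (∀ x ∈ U, DifferentiableAt ℂ (deriv f) x) ∧
    ∀ x ∈ U, deriv (deriv f) x = Q x * f x

theorem chudnovsky_one_normal_form
    (U : Set ℂ) (hU : IsOpen U)
    (hUne : ∀ x ∈ U, x * (x - 1) * (x + 1) ≠ 0)
    (Ψ g : ℂ → ℂ)
    (hΨ1 : ∀ x ∈ U, DifferentiableAt ℂ Ψ x)
    (hΨ2 : ∀ x ∈ U, DifferentiableAt ℂ (deriv Ψ) x)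
    (hode : ∀ x ∈ U, x * (x - 1) * (x + 1) * deriv (deriv Ψ) x
      + (3 * x ^ 2 - 1) * deriv Ψ x + x * Ψ x = 0)
    (hg1 : ∀ x ∈ U, DifferentiableAt ℂ g x)
    (hg2 : ∀ x ∈ U, DifferentiableAt ℂ (deriv g) x)
    (hgsq : ∀ x ∈ U, g x ^ 2 = x * (x - 1) * (x + 1)) :
    SolvesOn (fun x => -(1 / 4) * (x ^ 2 + 1) ^ 2 / (x ^ 2 * (x - 1) ^ 2 * (x + 1) ^ 2))
      (fun x => g x * Ψ x) U := by
  -- first derivative of the product, valid on all of U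
  have hd1 : ∀ x ∈ U, deriv (fun y => g y * Ψ y) x = deriv g x * Ψ x + g x * deriv Ψ x :=
    fun x hx => deriv_mul (hg1 x hx) (hΨ1 x hx)
  -- e1 : 2 g g' = 3x² - 1 on U
  have e1 : ∀ x ∈ U, 2 * g x * deriv g x = 3 * x ^ 2 - 1 := by
    intro x hx
    have hEq : (fun y => g y ^ 2) =ᶠ[nhds x] (fun y => y * (y - 1) * (y + 1)) :=
      Filter.eventuallyEq_of_mem (hU.mem_nhds hx) (fun y hy => hgsq y hy)
    have hL : deriv (fun y => g y ^ 2) x = 2 * g x * deriv g x := by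
      have : (fun y => g y ^ 2) = fun y => g y * g y := by funext y; ring
      rw [this, deriv_fun_mul (hg1 x hx) (hg1 x hx)]; ring
    have hR : deriv (fun y : ℂ => y * (y - 1) * (y + 1)) x = 3 * x ^ 2 - 1 := by
      have h1 : HasDerivAt (fun y : ℂ => y * (y - 1) * (y + 1)) (3 * x ^ 2 - 1) x := by
        have h2 : HasDerivAt (fun y : ℂ => y ^ 3 - y) (3 * x ^ 2 - 1) x := by
          simpa using (hasDerivAt_pow 3 x).fun_sub (hasDerivAt_id x)
        have : (fun y : ℂ => y * (y - 1) * (y + 1)) = fun y : ℂ => y ^ 3 - y := by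
          funext y; ring
        rw [this]; exact h2
      exact h1.deriv
    rw [← hL, hEq.deriv_eq, hR]
  -- e2 : 2 g'² + 2 g g'' = 6x on U
  have e2 : ∀ x ∈ U, 2 * deriv g x ^ 2 + 2 * g x * deriv (deriv g) x = 6 * x := by
    intro x hx
    have hEq : (fun y => 2 * g y * deriv g y) =ᶠ[nhds x] (fun y => 3 * y ^ 2 - 1) :=
      Filter.eventuallyEq_of_mem (hU.mem_nhds hx) (fun y hy => e1 y hy)
    have hL : deriv (fun y => 2 * g y * deriv g y) x
        = 2 * deriv g x ^ 2 + 2 * g x * deriv (deriv g) x := by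
      have h1 : deriv (fun y => (2 * g y) * deriv g y) x
          = deriv (fun y => 2 * g y) x * deriv g x + (2 * g x) * deriv (deriv g) x :=
        deriv_mul ((hg1 x hx).const_mul 2) (hg2 x hx)
      rw [h1, deriv_const_mul 2 (hg1 x hx)]; ring
    have hR : deriv (fun y : ℂ => 3 * y ^ 2 - 1) x = 6 * x := by
      have h2 : HasDerivAt (fun y : ℂ => 3 * y ^ 2 - 1) (6 * x) x := by
        have := ((hasDerivAt_pow 2 x).const_mul (3 : ℂ)).sub_const 1
        exact this.congr_deriv (by rw [show (2:ℕ) - 1 = 1 from rfl]; push_cast; ring)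
      exact h2.deriv
    rw [← hL, hEq.deriv_eq, hR]
  refine ⟨fun x hx => (hg1 x hx).mul (hΨ1 x hx), ?_, ?_⟩
  · intro x hx
    have hEq : deriv (fun y => g y * Ψ y) =ᶠ[nhds x]
        (fun y => deriv g y * Ψ y + g y * deriv Ψ y) :=
      Filter.eventuallyEq_of_mem (hU.mem_nhds hx) (fun y hy => hd1 y hy)
    have hdiff : DifferentiableAt ℂ (fun y => deriv g y * Ψ y + g y * deriv Ψ y) x :=
      ((hg2 x hx).mul (hΨ1 x hx)).add ((hg1 x hx).mul (hΨ2 x hx))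
    exact hEq.differentiableAt_iff.mpr hdiff
  · intro x hx
    have hEq : deriv (fun y => g y * Ψ y) =ᶠ[nhds x]
        (fun y => deriv g y * Ψ y + g y * deriv Ψ y) :=
      Filter.eventuallyEq_of_mem (hU.mem_nhds hx) (fun y hy => hd1 y hy)
    have hdd : deriv (deriv (fun y => g y * Ψ y)) x
        = deriv (deriv g) x * Ψ x + 2 * deriv g x * deriv Ψ x + g x * deriv (deriv Ψ) x := by
      rw [hEq.deriv_eq,
        deriv_fun_add (f := fun y => deriv g y * Ψ y) (g := fun y => g y * deriv Ψ y) ((hg2 x hx).mul (hΨ1 x hx)) ((hg1 x hx).mul (hΨ2 x hx)),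
        deriv_fun_mul (hg2 x hx) (hΨ1 x hx), deriv_fun_mul (hg1 x hx) (hΨ2 x hx)]
      ring
    have hden : x ^ 2 * (x - 1) ^ 2 * (x + 1) ^ 2 ≠ 0 := by
      have h : x ^ 2 * (x - 1) ^ 2 * (x + 1) ^ 2 = (x * (x - 1) * (x + 1)) ^ 2 := by ring
      rw [h]; exact pow_ne_zero 2 (hUne x hx)
    rw [hdd, div_mul_eq_mul_div, eq_div_iff hden]
    have hA := hgsq x hx
    have hB := e1 x hx
    have hC := e2 x hx
    have hD := hode x hx
    linear_combination
      (-(deriv (deriv g) x * Ψ x * (x * (x - 1) * (x + 1)))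
        - 2 * deriv g x * deriv Ψ x * (x * (x - 1) * (x + 1))
        + (1 / 2) * (3 * x ^ 2 - 1) * Ψ x * deriv g x) * hA
      + (-(1 / 2) * (x * (x - 1) * (x + 1)) * Ψ x * deriv g x
        + g x * (x * (x - 1) * (x + 1)) * deriv Ψ x
        - (1 / 4) * (3 * x ^ 2 - 1) * g x * Ψ x) * hB
      + ((1 / 2) * g x * (x * (x - 1) * (x + 1)) * Ψ x) * hC
      + (g x * (x * (x - 1) * (x + 1))) * hD
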